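/- Let A, B, C be n×n complex matrices with A Hermitian and B skew-Hermitian. Let f_1 ≥ ... ≥ f_n be the eigenvalues of (C+C*)/2 and g_1 ≥ ... ≥ g_n the eigenvalues of −i(C−C*)/2, with corresponding unitary diagonalizations U, V as in the setup. Let a_1 ≥ ... ≥ a_n be the eigenvalues of A and b_1 ≥ ... ≥ b_n the eigenvalues of −iB, and set A_1 = diag(a_1,...,a_n), B_1 = i·diag(b_1,...,b_n). Then for any unitary matrices X, Y: ‖U*A_1U + V*B_1V − C‖ ≤ ‖X*AX + Y*BY − C‖ in the Frobenius norm. -/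
import Mathlib

open Matrix

variable {n : ℕ}

noncomputable def frobSq (X : Matrix (Fin n) (Fin n) ℂ) : ℝ := (Matrix.trace (Xᴴ * X)).re

lemma frobSq_eq_sum (X : Matrix (Fin n) (Fin n) ℂ) :
    frobSq X = ∑ i, ∑ j, Complex.normSq (X j i) := by
  simp [frobSq, Matrix.trace, Matrix.diag, Matrix.mul_apply, Complex.normSq_eq_conj_mul_self, Complex.normSq_apply]

lemma frobSq_nonneg (X : Matrix (Fin n) (Fin n) ℂ) : 0 ≤ frobSq X := by
  rw [frobSq_eq_sum]
  exact Finset.sum_nonneg fun i _ => Finset.sum_nonneg fun j _ => Complex.normSq_nonneg _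

lemma frobSq_mul_unitary (P X : Matrix (Fin n) (Fin n) ℂ)
    (hX : X ∈ Matrix.unitaryGroup (Fin n) ℂ) : frobSq (P * X) = frobSq P := by
  have h1 : X * Xᴴ = 1 := by
    have := (Matrix.mem_unitaryGroup_iff).mp hX
    simpa [Matrix.star_eq_conjTranspose] using this
  simp only [frobSq, conjTranspose_mul]
  rw [Matrix.trace_mul_cycle, Matrix.mul_assoc P X Xᴴ, h1, Matrix.mul_one, Matrix.trace_mul_comm]

lemma frobSq_unitary_mul (P X : Matrix (Fin n) (Fin n) ℂ)
    (hX : X ∈ Matrix.unitaryGroup (Fin n) ℂ) : frobSq (X * P) = frobSq P := by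
  have h1 : Xᴴ * X = 1 := by
    have := (Matrix.mem_unitaryGroup_iff').mp hX
    simpa [Matrix.star_eq_conjTranspose] using this
  simp only [frobSq, conjTranspose_mul]
  rw [Matrix.mul_assoc, ← Matrix.mul_assoc Xᴴ, h1, Matrix.one_mul]

lemma frobSq_diagonal_real (v : Fin n → ℝ) :
    frobSq (Matrix.diagonal (fun i => (v i : ℂ))) = ∑ i, (v i)^2 := by
  rw [frobSq_eq_sum]
  rw [Finset.sum_comm]
  refine Finset.sum_congr rfl fun i _ => ?_
  rw [Finset.sum_eq_single i]
  · simp [Matrix.diagonal_apply_eq, Complex.normSq_ofReal, sq]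
  · intro j _ hj
    simp [Matrix.diagonal_apply_ne _ (Ne.symm hj)]
  · simp

lemma normSq_doublyStochastic (M : Matrix (Fin n) (Fin n) ℂ)
    (hM : M ∈ Matrix.unitaryGroup (Fin n) ℂ) :
    (Matrix.of fun i j => Complex.normSq (M i j)) ∈ doublyStochastic ℝ (Fin n) := by
  have h1 : M * Mᴴ = 1 := by
    simpa [Matrix.star_eq_conjTranspose] using (Matrix.mem_unitaryGroup_iff).mp hM
  have h2 : Mᴴ * M = 1 := by
    simpa [Matrix.star_eq_conjTranspose] using (Matrix.mem_unitaryGroup_iff').mp hM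
  rw [mem_doublyStochastic_iff_sum]
  refine ⟨fun i j => Complex.normSq_nonneg _, fun i => ?_, fun j => ?_⟩
  · have h : ((M * Mᴴ) i i) = ∑ j, (Complex.normSq (M i j) : ℂ) := by
      simp [Matrix.mul_apply, Complex.mul_conj]
    rw [h1] at h
    have := congrArg Complex.re h
    simpa using this.symm
  · have h : ((Mᴴ * M) j j) = ∑ i, (Complex.normSq (M i j) : ℂ) := by
      simp [Matrix.mul_apply, Complex.mul_conj, mul_comm]
    rw [h2] at h
    have := congrArg Complex.re h
    simpa using this.symm

lemma sum_doublyStochastic_le (a f : Fin n → ℝ) (ha : Antitone a) (hf : Antitone f)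
    (S : Matrix (Fin n) (Fin n) ℝ) (hS : S ∈ doublyStochastic ℝ (Fin n)) :
    ∑ i, ∑ j, S i j * (a i * f j) ≤ ∑ i, a i * f i := by
  obtain ⟨w, hw0, hw1, hwS⟩ := exists_eq_sum_perm_of_mem_doublyStochastic hS
  have hSe : ∀ i j, S i j = ∑ σ : Equiv.Perm (Fin n), w σ * (if σ i = j then 1 else 0) := by
    intro i j
    rw [← hwS]
    simp [Equiv.Perm.permMatrix, PEquiv.toMatrix_apply, Equiv.toPEquiv_apply, Matrix.sum_apply,
      Matrix.smul_apply, eq_comm]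
  have key : ∀ σ : Equiv.Perm (Fin n), ∑ i, a i * f (σ i) ≤ ∑ i, a i * f i := fun σ => by
    simpa [smul_eq_mul] using (ha.monovary hf).sum_smul_comp_perm_le_sum_smul (σ := σ)
  calc ∑ i, ∑ j, S i j * (a i * f j)
      = ∑ i, ∑ j, ∑ σ : Equiv.Perm (Fin n), w σ * (if σ i = j then a i * f j else 0) := by
        refine Finset.sum_congr rfl fun i _ => Finset.sum_congr rfl fun j _ => ?_
        rw [hSe i j, Finset.sum_mul]
        exact Finset.sum_congr rfl fun σ _ => by by_cases h : σ i = j <;> simp [h]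
    _ = ∑ i, ∑ σ : Equiv.Perm (Fin n), ∑ j, w σ * (if σ i = j then a i * f j else 0) :=
        Finset.sum_congr rfl fun i _ => Finset.sum_comm
    _ = ∑ σ : Equiv.Perm (Fin n), ∑ i, ∑ j, w σ * (if σ i = j then a i * f j else 0) :=
        Finset.sum_comm
    _ = ∑ σ : Equiv.Perm (Fin n), w σ * ∑ i, a i * f (σ i) := by
        refine Finset.sum_congr rfl fun σ _ => ?_
        rw [Finset.mul_sum]
        refine Finset.sum_congr rfl fun i _ => ?_
        rw [← Finset.mul_sum]
        congr 1
        simp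
    _ ≤ ∑ σ : Equiv.Perm (Fin n), w σ * ∑ i, a i * f i :=
        Finset.sum_le_sum fun σ _ => mul_le_mul_of_nonneg_left (key σ) (hw0 σ)
    _ = ∑ i, a i * f i := by rw [← Finset.sum_mul, hw1, one_mul]

lemma trace_diag_re (a f : Fin n → ℝ) (M : Matrix (Fin n) (Fin n) ℂ) :
    (Matrix.trace (Matrix.diagonal (fun i => (a i : ℂ)) * M * Matrix.diagonal (fun i => (f i : ℂ)) * Mᴴ)).re
      = ∑ i, ∑ j, Complex.normSq (M i j) * (a i * f j) := by
  have h : ∀ i, (Matrix.diagonal (fun i => (a i : ℂ)) * M * Matrix.diagonal (fun i => (f i : ℂ)) * Mᴴ) i i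
      = ∑ j, (a i : ℂ) * M i j * (f j : ℂ) * (starRingEnd ℂ) (M i j) := by
    intro i
    rw [Matrix.mul_apply]
    refine Finset.sum_congr rfl fun j _ => ?_
    rw [Matrix.mul_diagonal, Matrix.diagonal_mul, Matrix.conjTranspose_apply]
    rfl
  rw [Matrix.trace]
  simp only [Matrix.diag, h]
  rw [Complex.re_sum]
  refine Finset.sum_congr rfl fun i _ => ?_
  rw [Complex.re_sum]
  refine Finset.sum_congr rfl fun j _ => ?_
  have : (a i : ℂ) * M i j * (f j : ℂ) * (starRingEnd ℂ) (M i j)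
      = ((Complex.normSq (M i j) * (a i * f j) : ℝ) : ℂ) := by
    push_cast
    rw [Complex.normSq_eq_conj_mul_self]
    ring
  rw [this, Complex.ofReal_re]

lemma trace_bound (a f : Fin n → ℝ) (ha : Antitone a) (hf : Antitone f)
    (M : Matrix (Fin n) (Fin n) ℂ) (hM : M ∈ Matrix.unitaryGroup (Fin n) ℂ) :
    (Matrix.trace (Matrix.diagonal (fun i => (a i : ℂ)) * M *
        Matrix.diagonal (fun i => (f i : ℂ)) * Mᴴ)).re ≤ ∑ i, a i * f i := by
  rw [trace_diag_re]
  exact sum_doublyStochastic_le a f ha hf _ (normSq_doublyStochastic M hM)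

lemma frobSq_sub (P Q : Matrix (Fin n) (Fin n) ℂ) :
    frobSq (P - Q) = frobSq P + frobSq Q - 2 * (Matrix.trace (Pᴴ * Q)).re := by
  have h : (P - Q)ᴴ * (P - Q) = Pᴴ * P - Pᴴ * Q - Qᴴ * P + Qᴴ * Q := by
    rw [conjTranspose_sub]
    noncomm_ring
  have h2 : Matrix.trace (Qᴴ * P) = star (Matrix.trace (Pᴴ * Q)) := by
    rw [← Matrix.trace_conjTranspose, conjTranspose_mul, conjTranspose_conjTranspose]
  simp only [frobSq, h, Matrix.trace_add, Matrix.trace_sub, h2, Complex.add_re, Complex.sub_re]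
  rw [Complex.star_def, Complex.conj_re]
  ring

lemma frobSq_add_I_smul (M N : Matrix (Fin n) (Fin n) ℂ)
    (hM : Mᴴ = M) (hN : Nᴴ = N) :
    frobSq (M + Complex.I • N) = frobSq M + frobSq N := by
  have h : (M + Complex.I • N)ᴴ * (M + Complex.I • N)
      = Mᴴ * M + Nᴴ * N + (Complex.I • (M * N) - Complex.I • (N * M)) := by
    rw [conjTranspose_add, conjTranspose_smul, hM, hN, Complex.star_def, Complex.conj_I]
    simp only [Matrix.add_mul, Matrix.mul_add, smul_mul_assoc, mul_smul_comm, hM, hN]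
    match_scalars <;> simp [Complex.I_sq]
  have ht : Matrix.trace (M * N) = Matrix.trace (N * M) := Matrix.trace_mul_comm M N
  simp only [frobSq, h, Matrix.trace_add, Matrix.trace_sub, Matrix.trace_smul, ht, hM, hN]
  simp [Complex.add_re]

lemma star_mem' (X : Matrix (Fin n) (Fin n) ℂ) (hX : X ∈ Matrix.unitaryGroup (Fin n) ℂ) :
    Xᴴ ∈ Matrix.unitaryGroup (Fin n) ℂ := by
  rw [← Matrix.star_eq_conjTranspose]
  exact Unitary.star_mem hX

lemma frobSq_conj (P X : Matrix (Fin n) (Fin n) ℂ) (hX : X ∈ Matrix.unitaryGroup (Fin n) ℂ) :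
    frobSq (X * P * Xᴴ) = frobSq P := by
  rw [frobSq_mul_unitary _ _ (star_mem' X hX), frobSq_unitary_mul _ _ hX]

lemma sum_sq_sub (a f : Fin n → ℝ) :
    ∑ i, (a i - f i)^2 = (∑ i, a i^2) + (∑ i, f i^2) - 2 * ∑ i, a i * f i := by
  rw [Finset.mul_sum, ← Finset.sum_add_distrib, ← Finset.sum_sub_distrib]
  exact Finset.sum_congr rfl fun i _ => by ring

lemma herm_eq (H : Matrix (Fin n) (Fin n) ℂ) (a f : Fin n → ℝ)
    (U : Matrix (Fin n) (Fin n) ℂ) (hU : U ∈ Matrix.unitaryGroup (Fin n) ℂ)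
    (hUH : U * H * Uᴴ = Matrix.diagonal (fun i => (f i : ℂ))) :
    frobSq (Uᴴ * Matrix.diagonal (fun i => (a i : ℂ)) * U - H) = ∑ i, (a i - f i)^2 := by
  have hUU : U * Uᴴ = 1 := by
    simpa [Matrix.star_eq_conjTranspose] using (Matrix.mem_unitaryGroup_iff).mp hU
  have h1 : U * (Uᴴ * Matrix.diagonal (fun i => (a i : ℂ)) * U - H) * Uᴴ
      = Matrix.diagonal (fun i => ((a i - f i : ℝ) : ℂ)) := by
    rw [Matrix.mul_sub, Matrix.sub_mul, hUH]
    rw [show U * (Uᴴ * Matrix.diagonal (fun i => (a i : ℂ)) * U) * Uᴴ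
        = (U * Uᴴ) * Matrix.diagonal (fun i => (a i : ℂ)) * (U * Uᴴ) from by
      simp only [Matrix.mul_assoc]]
    rw [hUU, Matrix.one_mul, Matrix.mul_one]
    ext i j
    rcases eq_or_ne i j with rfl | h
    · simp [Matrix.sub_apply]
    · simp [Matrix.sub_apply, Matrix.diagonal_apply_ne _ h]
  rw [← frobSq_conj _ U hU, h1, frobSq_diagonal_real]

lemma herm_key (A H : Matrix (Fin n) (Fin n) ℂ) (hA : Aᴴ = A) (hH : Hᴴ = H)
    (a f : Fin n → ℝ) (ha : Antitone a) (hf : Antitone f)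
    (U : Matrix (Fin n) (Fin n) ℂ) (hU : U ∈ Matrix.unitaryGroup (Fin n) ℂ)
    (hUH : U * H * Uᴴ = Matrix.diagonal (fun i => (f i : ℂ)))
    (W : Matrix (Fin n) (Fin n) ℂ) (hW : W ∈ Matrix.unitaryGroup (Fin n) ℂ)
    (hWA : W * A * Wᴴ = Matrix.diagonal (fun i => (a i : ℂ)))
    (X : Matrix (Fin n) (Fin n) ℂ) (hX : X ∈ Matrix.unitaryGroup (Fin n) ℂ) :
    ∑ i, (a i - f i)^2 ≤ frobSq (Xᴴ * A * X - H) := by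
  have hWW : Wᴴ * W = 1 := by
    simpa [Matrix.star_eq_conjTranspose] using (Matrix.mem_unitaryGroup_iff').mp hW
  have hUU : Uᴴ * U = 1 := by
    simpa [Matrix.star_eq_conjTranspose] using (Matrix.mem_unitaryGroup_iff').mp hU
  have hA' : A = Wᴴ * Matrix.diagonal (fun i => (a i : ℂ)) * W := by
    rw [← hWA]
    rw [show Wᴴ * (W * A * Wᴴ) * W = (Wᴴ * W) * A * (Wᴴ * W) from by simp only [Matrix.mul_assoc]]
    rw [hWW, Matrix.one_mul, Matrix.mul_one]
  have hH' : H = Uᴴ * Matrix.diagonal (fun i => (f i : ℂ)) * U := by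
    rw [← hUH]
    rw [show Uᴴ * (U * H * Uᴴ) * U = (Uᴴ * U) * H * (Uᴴ * U) from by simp only [Matrix.mul_assoc]]
    rw [hUU, Matrix.one_mul, Matrix.mul_one]
  -- Frobenius norms of the pieces
  have e1 : frobSq (Xᴴ * A * X) = ∑ i, (a i)^2 := by
    rw [show Xᴴ * A * X = Xᴴ * A * (Xᴴ)ᴴ by rw [conjTranspose_conjTranspose]]
    rw [frobSq_conj _ _ (star_mem' X hX), ← frobSq_conj A W hW, hWA, frobSq_diagonal_real]
  have e2 : frobSq H = ∑ i, (f i)^2 := by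
    rw [← frobSq_conj H U hU, hUH, frobSq_diagonal_real]
  -- the trace term
  set M : Matrix (Fin n) (Fin n) ℂ := W * X * Uᴴ with hMdef
  have hMmem : M ∈ Matrix.unitaryGroup (Fin n) ℂ :=
    mul_mem (mul_mem hW hX) (star_mem' U hU)
  have hMH : Mᴴ = U * Xᴴ * Wᴴ := by
    simp [hMdef, conjTranspose_mul, Matrix.mul_assoc]
  have etr : Matrix.trace (Xᴴ * A * X * H)
      = Matrix.trace (Matrix.diagonal (fun i => (a i : ℂ)) * M *
          Matrix.diagonal (fun i => (f i : ℂ)) * Mᴴ) := by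
    rw [hA', hH', hMH]
    rw [show Xᴴ * (Wᴴ * Matrix.diagonal (fun i => (a i : ℂ)) * W) * X *
          (Uᴴ * Matrix.diagonal (fun i => (f i : ℂ)) * U)
        = (Xᴴ * Wᴴ) * (Matrix.diagonal (fun i => (a i : ℂ)) * (W * (X * (Uᴴ *
            (Matrix.diagonal (fun i => (f i : ℂ)) * U))))) from by simp only [Matrix.mul_assoc]]
    rw [show Matrix.diagonal (fun i => (a i : ℂ)) * (W * X * Uᴴ) *
          Matrix.diagonal (fun i => (f i : ℂ)) * (U * Xᴴ * Wᴴ)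
        = (Matrix.diagonal (fun i => (a i : ℂ)) * (W * (X * (Uᴴ *
            (Matrix.diagonal (fun i => (f i : ℂ)) * U))))) * (Xᴴ * Wᴴ) from by
      simp only [Matrix.mul_assoc]]
    exact Matrix.trace_mul_comm _ _
  have hXAXH : (Xᴴ * A * X)ᴴ = Xᴴ * A * X := by
    simp [conjTranspose_mul, hA, Matrix.mul_assoc]
  have expand : frobSq (Xᴴ * A * X - H)
      = (∑ i, (a i)^2) + (∑ i, (f i)^2) - 2 * (Matrix.trace (Xᴴ * A * X * H)).re := by
    rw [frobSq_sub, e1, e2, hXAXH]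
  rw [expand, sum_sq_sub]
  have := trace_bound a f ha hf M hMmem
  rw [← etr] at this
  linarith

/-- Frobenius norm of a complex matrix. -/
noncomputable def frob {n : ℕ} (X : Matrix (Fin n) (Fin n) ℂ) : ℝ :=
  Real.sqrt (Matrix.trace (Xᴴ * X)).re

theorem stmt1 {n : ℕ} (A B C : Matrix (Fin n) (Fin n) ℂ)
    (hA : A.IsHermitian) (hB : Bᴴ = -B)
    (f g a b : Fin n → ℝ)
    (hf : Antitone f) (hg : Antitone g) (ha : Antitone a) (hb : Antitone b)
    (U V : Matrix (Fin n) (Fin n) ℂ)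
    (hU : U ∈ Matrix.unitaryGroup (Fin n) ℂ) (hV : V ∈ Matrix.unitaryGroup (Fin n) ℂ)
    (hUF : U * ((1 / 2 : ℂ) • (C + Cᴴ)) * Uᴴ = Matrix.diagonal (fun i => (f i : ℂ)))
    (hVG : V * ((-Complex.I / 2 : ℂ) • (C - Cᴴ)) * Vᴴ = Matrix.diagonal (fun i => (g i : ℂ)))
    (haA : ∃ W ∈ Matrix.unitaryGroup (Fin n) ℂ,
      W * A * Wᴴ = Matrix.diagonal (fun i => (a i : ℂ)))
    (hbB : ∃ W ∈ Matrix.unitaryGroup (Fin n) ℂ,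
      W * ((-Complex.I) • B) * Wᴴ = Matrix.diagonal (fun i => (b i : ℂ))) :
    ∀ X ∈ Matrix.unitaryGroup (Fin n) ℂ, ∀ Y ∈ Matrix.unitaryGroup (Fin n) ℂ,
      frob (Uᴴ * Matrix.diagonal (fun i => (a i : ℂ)) * U +
          Vᴴ * (Complex.I • Matrix.diagonal (fun i => (b i : ℂ))) * V - C) ≤
        frob (Xᴴ * A * X + Yᴴ * B * Y - C) := by
  intro X hX Y hY
  obtain ⟨W, hW, hWA⟩ := haA
  obtain ⟨W2, hW2, hW2B⟩ := hbB
  set H : Matrix (Fin n) (Fin n) ℂ := (1 / 2 : ℂ) • (C + Cᴴ) with hHdef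
  set K : Matrix (Fin n) (Fin n) ℂ := (-Complex.I / 2 : ℂ) • (C - Cᴴ) with hKdef
  have hHh : Hᴴ = H := by
    rw [hHdef, conjTranspose_smul, conjTranspose_add, conjTranspose_conjTranspose]
    rw [show star (1 / 2 : ℂ) = 1 / 2 from by simp]
    rw [add_comm]
  have hKh : Kᴴ = K := by
    rw [hKdef, conjTranspose_smul, conjTranspose_sub, conjTranspose_conjTranspose]
    rw [show star (-Complex.I / 2 : ℂ) = Complex.I / 2 from by
      simp [Complex.ext_iff]]
    module
  have hC : C = H + Complex.I • K := by
    rw [hHdef, hKdef]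
    match_scalars
    · linear_combination (1/2 : ℂ) * Complex.I_mul_I
    · linear_combination (-1/2 : ℂ) * Complex.I_mul_I
  have hB' : ((-Complex.I) • B)ᴴ = (-Complex.I) • B := by
    rw [conjTranspose_smul, hB]
    rw [show star (-Complex.I) = Complex.I from by simp]
    rw [smul_neg, neg_smul]
  have hconjherm : ∀ (P Q : Matrix (Fin n) (Fin n) ℂ), Pᴴ = P → (Qᴴ * P * Q)ᴴ = Qᴴ * P * Q :=
    fun P Q hP => by simp [conjTranspose_mul, hP, Matrix.mul_assoc]
  have hDa : (Matrix.diagonal (fun i => (a i : ℂ)))ᴴ = Matrix.diagonal (fun i => (a i : ℂ)) := by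
    ext i j
    rcases eq_or_ne i j with rfl | h
    · simp
    · simp [Matrix.diagonal_apply_ne _ h, Matrix.diagonal_apply_ne _ (Ne.symm h)]
  have hDb : (Matrix.diagonal (fun i => (b i : ℂ)))ᴴ = Matrix.diagonal (fun i => (b i : ℂ)) := by
    ext i j
    rcases eq_or_ne i j with rfl | h
    · simp
    · simp [Matrix.diagonal_apply_ne _ h, Matrix.diagonal_apply_ne _ (Ne.symm h)]
  have hdecomp1 : Uᴴ * Matrix.diagonal (fun i => (a i : ℂ)) * U +
      Vᴴ * (Complex.I • Matrix.diagonal (fun i => (b i : ℂ))) * V - C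
      = (Uᴴ * Matrix.diagonal (fun i => (a i : ℂ)) * U - H) +
        Complex.I • (Vᴴ * Matrix.diagonal (fun i => (b i : ℂ)) * V - K) := by
    rw [hC]
    simp only [mul_smul_comm, smul_mul_assoc, smul_sub]
    abel
  have hdecomp2 : Xᴴ * A * X + Yᴴ * B * Y - C
      = (Xᴴ * A * X - H) + Complex.I • (Yᴴ * ((-Complex.I) • B) * Y - K) := by
    rw [hC]
    simp only [mul_smul_comm, smul_mul_assoc, smul_sub, smul_smul]
    rw [show Complex.I * -Complex.I = (1 : ℂ) from by
      rw [mul_neg, Complex.I_mul_I, neg_neg]]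
    rw [one_smul]
    abel
  have hM0 : (Uᴴ * Matrix.diagonal (fun i => (a i : ℂ)) * U - H)ᴴ
      = Uᴴ * Matrix.diagonal (fun i => (a i : ℂ)) * U - H := by
    rw [conjTranspose_sub, hconjherm _ _ hDa, hHh]
  have hN0 : (Vᴴ * Matrix.diagonal (fun i => (b i : ℂ)) * V - K)ᴴ
      = Vᴴ * Matrix.diagonal (fun i => (b i : ℂ)) * V - K := by
    rw [conjTranspose_sub, hconjherm _ _ hDb, hKh]
  have hM1 : (Xᴴ * A * X - H)ᴴ = Xᴴ * A * X - H := by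
    rw [conjTranspose_sub, hconjherm _ _ hA.eq, hHh]
  have hN1 : (Yᴴ * ((-Complex.I) • B) * Y - K)ᴴ = Yᴴ * ((-Complex.I) • B) * Y - K := by
    rw [conjTranspose_sub, hconjherm _ _ hB', hKh]
  have hcand : frobSq (Uᴴ * Matrix.diagonal (fun i => (a i : ℂ)) * U +
      Vᴴ * (Complex.I • Matrix.diagonal (fun i => (b i : ℂ))) * V - C)
      = (∑ i, (a i - f i)^2) + (∑ i, (b i - g i)^2) := by
    rw [hdecomp1, frobSq_add_I_smul _ _ hM0 hN0, herm_eq H a f U hU hUF, herm_eq K b g V hV hVG]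
  have hineq : frobSq (Uᴴ * Matrix.diagonal (fun i => (a i : ℂ)) * U +
      Vᴴ * (Complex.I • Matrix.diagonal (fun i => (b i : ℂ))) * V - C)
      ≤ frobSq (Xᴴ * A * X + Yᴴ * B * Y - C) := by
    rw [hcand, hdecomp2, frobSq_add_I_smul _ _ hM1 hN1]
    exact add_le_add
      (herm_key A H hA.eq hHh a f ha hf U hU hUF W hW hWA X hX)
      (herm_key ((-Complex.I) • B) K hB' hKh b g hb hg V hV hVG W2 hW2 hW2B Y hY)
  exact Real.sqrt_le_sqrt hineq
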